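/- If X ⊆ R^n (n ≥ 2) is a connected set, then for every r ≥ sqrt(n−1)/2 the offset discretization Δ_r(X) = U(X,r) ∩ Z^n is 0-connected. -/

import Mathlib

noncomputable section

/-- Embedding of an integer point into Euclidean `n`-space. -/
def toE (n : ℕ) (p : Fin n → ℤ) : EuclideanSpace ℝ (Fin n) := WithLp.toLp 2 (fun i => (p i : ℝ))

/-- Two integer points are `k`-adjacent iff they are distinct, all coordinates differ
by at most 1, and at most `n - k` coordinates differ. -/
def kAdj (n k : ℕ) (p q : Fin n → ℤ) : Prop :=
  p ≠ q ∧ (∀ i, |p i - q i| ≤ 1) ∧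
    (Finset.univ.filter (fun i => p i ≠ q i)).card ≤ n - k

/-- A set of integer points is `k`-connected iff any two of its points are joined by a
path inside the set whose consecutive points are `k`-adjacent. -/
def kConn (n k : ℕ) (S : Set (Fin n → ℤ)) : Prop :=
  ∀ p ∈ S, ∀ q ∈ S,
    Relation.ReflTransGen (fun a b => a ∈ S ∧ b ∈ S ∧ kAdj n k a b) p q

/-- The closed `r`-offset (closed `r`-neighborhood) of `X`. -/
def offset (n : ℕ) (X : Set (EuclideanSpace ℝ (Fin n))) (r : ℝ) :
    Set (EuclideanSpace ℝ (Fin n)) := ⋃ x ∈ X, Metric.closedBall x r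

/-- The `r`-offset discretization of `X`: the integer points in the `r`-offset. -/
def disc (n : ℕ) (X : Set (EuclideanSpace ℝ (Fin n))) (r : ℝ) :
    Set (Fin n → ℤ) := {p | toE n p ∈ offset n X r}

namespace DiscProof

open Finset Metric Relation Set

variable {n : ℕ}

abbrev E (n : ℕ) := EuclideanSpace ℝ (Fin n)

/-- rounding to nearest integer point -/
def rnd (x : E n) : Fin n → ℤ := fun i => ⌊x i + 1/2⌋

def fl (x : E n) : Fin n → ℤ := fun i => ⌊x i⌋

/-- open unit cube with bottom corner b -/
def K (b : Fin n → ℤ) : Set (E n) := {z | ∀ i, (b i : ℝ) < z i ∧ z i < b i + 1}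

lemma toE_apply (p : Fin n → ℤ) (i : Fin n) : toE n p i = (p i : ℝ) := rfl

lemma coord_le_dist (x y : E n) (i : Fin n) : |x i - y i| ≤ dist x y := by
  rw [EuclideanSpace.dist_eq]
  have h : |x i - y i| = Real.sqrt (dist (x i) (y i) ^ 2) := by
    rw [Real.dist_eq, sq_abs, Real.sqrt_sq_eq_abs]
  rw [h]
  apply Real.sqrt_le_sqrt
  exact Finset.single_le_sum (f := fun j => dist (x j) (y j) ^ 2) (fun j _ => sq_nonneg _) (Finset.mem_univ i)

lemma dist_le_of_coords {x y x' y' : E n} (h : ∀ i, |x i - y i| ≤ |x' i - y' i|) :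
    dist x y ≤ dist x' y' := by
  rw [EuclideanSpace.dist_eq, EuclideanSpace.dist_eq]
  apply Real.sqrt_le_sqrt
  apply Finset.sum_le_sum
  intro i _
  rw [Real.dist_eq, Real.dist_eq]
  exact pow_le_pow_left₀ (abs_nonneg _) (h i) 2

lemma contCoord (i : Fin n) : Continuous fun z : E n => z i := by
  apply LipschitzWith.continuous (K := 1)
  apply LipschitzWith.of_dist_le_mul
  intro x y
  rw [Real.dist_eq, NNReal.coe_one, one_mul]
  exact coord_le_dist x y i

lemma rnd_close (x : E n) (i : Fin n) : |(rnd x i : ℝ) - x i| ≤ 1/2 := by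
  have h1 : (⌊x i + 1/2⌋ : ℝ) ≤ x i + 1/2 := Int.floor_le _
  have h2 : x i + 1/2 - 1 < (⌊x i + 1/2⌋ : ℝ) := Int.sub_one_lt_floor _
  rw [abs_le]
  unfold rnd
  constructor <;> linarith

lemma rnd_min (x : E n) (i : Fin n) (m : ℤ) : |(rnd x i : ℝ) - x i| ≤ |(m : ℝ) - x i| := by
  rcases le_or_gt (1/2 : ℝ) (|(m : ℝ) - x i|) with h | h
  · exact (rnd_close x i).trans h
  · have := abs_lt.mp h
    have hm : m = rnd x i := by
      have h1 : (m : ℝ) ≤ x i + 1/2 := by linarith [this.2]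
      have h2 : x i + 1/2 < m + 1 := by linarith [this.1]
      have : ⌊x i + 1/2⌋ = m := by
        rw [Int.floor_eq_iff]
        constructor
        · linarith [this.1]
        · push_cast; linarith [this.2]
      exact this.symm
    rw [← hm]

lemma dist_rnd_le (x : E n) (p : Fin n → ℤ) :
    dist (toE n (rnd x)) x ≤ dist (toE n p) x := by
  apply dist_le_of_coords
  intro i
  rw [toE_apply, toE_apply]
  exact rnd_min x i (p i)

lemma mem_disc_of {X : Set (E n)} {r : ℝ} {x : E n} (hx : x ∈ X) {p : Fin n → ℤ}
    (hp : dist (toE n p) x ≤ r) : p ∈ disc n X r := by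
  simp only [disc, offset, Set.mem_setOf_eq, Set.mem_iUnion, Metric.mem_closedBall,
    exists_prop]
  exact ⟨x, hx, hp⟩

lemma mem_disc_iff {X : Set (E n)} {r : ℝ} {p : Fin n → ℤ} :
    p ∈ disc n X r ↔ ∃ x ∈ X, dist (toE n p) x ≤ r := by
  simp only [disc, offset, Set.mem_setOf_eq, Set.mem_iUnion, Metric.mem_closedBall,
    exists_prop]


/-! ### Walking inside a ball towards the rounded center -/

def step1 (p c : Fin n → ℤ) : Fin n → ℤ := fun i =>
  if p i < c i then p i + 1 else if c i < p i then p i - 1 else p i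

lemma step1_coord_le (x : E n) (p : Fin n → ℤ) (i : Fin n) :
    |(step1 p (rnd x) i : ℝ) - x i| ≤ |(p i : ℝ) - x i| := by
  have hc := rnd_close x i
  have h1 := abs_le.mp hc
  unfold step1
  split_ifs with h h'
  · -- p i < rnd x i, move up
    have hpk : (p i : ℝ) ≤ (rnd x i : ℝ) - 1 := by exact_mod_cast Int.le_sub_one_of_lt h
    have hp : (p i : ℝ) ≤ x i - 1/2 := by linarith [h1.2]
    have habs : |(p i : ℝ) - x i| = x i - p i := by
      rw [abs_of_nonpos] <;> linarith
    rw [habs, abs_le]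
    push_cast
    constructor <;> linarith
  · -- rnd x i < p i, move down
    have hpk : (rnd x i : ℝ) + 1 ≤ (p i : ℝ) := by exact_mod_cast h'
    have hp : x i + 1/2 ≤ (p i : ℝ) := by linarith [h1.1]
    have habs : |(p i : ℝ) - x i| = p i - x i := by
      rw [abs_of_nonneg]; linarith
    rw [habs, abs_le]
    push_cast
    constructor <;> linarith
  · exact le_refl _

lemma step1_adj (p c : Fin n → ℤ) (hpc : p ≠ c) : kAdj n 0 p (step1 p c) := by
  refine ⟨?_, ?_, ?_⟩
  · intro he
    have : ∃ i, p i ≠ c i := by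
      by_contra hco
      push_neg at hco
      exact hpc (funext hco)
    obtain ⟨i, hi⟩ := this
    have := congrFun he i
    unfold step1 at this
    split_ifs at this <;> omega
  · intro i
    unfold step1
    split_ifs <;> simp <;> omega
  · rw [Nat.sub_zero]
    calc (Finset.univ.filter _).card ≤ Finset.univ.card := Finset.card_filter_le _ _
    _ = n := by simp

def msr (p c : Fin n → ℤ) : ℕ := ∑ i, (p i - c i).natAbs

lemma step1_msr (p c : Fin n → ℤ) (hpc : p ≠ c) : msr (step1 p c) c < msr p c := by
  apply Finset.sum_lt_sum
  · intro i _
    unfold step1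
    split_ifs <;> omega
  · have : ∃ i, p i ≠ c i := by
      by_contra hco
      push_neg at hco
      exact hpc (funext hco)
    obtain ⟨i, hi⟩ := this
    refine ⟨i, Finset.mem_univ i, ?_⟩
    unfold step1
    split_ifs <;> omega

/-- Every point of the discrete ball connects to the rounded center. -/
lemma conn_to_rnd {X : Set (E n)} {r : ℝ} {x : E n} (hx : x ∈ X) :
    ∀ N : ℕ, ∀ p : Fin n → ℤ, dist (toE n p) x ≤ r → msr p (rnd x) ≤ N →
      Relation.ReflTransGen
        (fun a b => a ∈ disc n X r ∧ b ∈ disc n X r ∧ kAdj n 0 a b) p (rnd x) := by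
  intro N
  induction N with
  | zero =>
    intro p _ hm
    have : p = rnd x := by
      funext i
      have : (p i - rnd x i).natAbs = 0 := by
        have := Finset.sum_eq_zero_iff.mp (Nat.le_zero.mp hm)
        exact this i (Finset.mem_univ i)
      omega
    rw [this]
  | succ N ih =>
    intro p hp hm
    by_cases hpc : p = rnd x
    · rw [hpc]
    · set s := step1 p (rnd x) with hs
      have hsd : dist (toE n s) x ≤ r := by
        refine le_trans ?_ hp
        apply dist_le_of_coords
        intro i
        rw [toE_apply, toE_apply]
        exact step1_coord_le x p i
      have hsm : msr s (rnd x) ≤ N := by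
        rw [hs]
        have := step1_msr p (rnd x) hpc
        omega
      exact Relation.ReflTransGen.head
        ⟨mem_disc_of hx hp, mem_disc_of hx hsd, step1_adj p (rnd x) hpc⟩
        (ih s hsd hsm)

/-! ### Symmetry and adjacency moves -/

lemma kAdj_symm {p q : Fin n → ℤ} (h : kAdj n 0 p q) : kAdj n 0 q p := by
  obtain ⟨h1, h2, h3⟩ := h
  refine ⟨h1.symm, fun i => by rw [abs_sub_comm]; exact h2 i, ?_⟩
  have he : (Finset.univ.filter (fun i => q i ≠ p i)) =
      (Finset.univ.filter (fun i => p i ≠ q i)) := by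
    apply Finset.filter_congr
    intro i _
    simp [ne_comm]
  rw [he]
  exact h3

lemma relSymm {S : Set (Fin n → ℤ)} :
    Symmetric (fun a b => a ∈ S ∧ b ∈ S ∧ kAdj n 0 a b) := by
  intro a b ⟨h1, h2, h3⟩
  exact ⟨h2, h1, kAdj_symm h3⟩

/-- two points within sup-distance 1 are joined (if both in S) -/
lemma rel_of_linf {S : Set (Fin n → ℤ)} {p q : Fin n → ℤ} (hp : p ∈ S) (hq : q ∈ S)
    (h : ∀ i, |p i - q i| ≤ 1) :
    Relation.ReflTransGen (fun a b => a ∈ S ∧ b ∈ S ∧ kAdj n 0 a b) p q := by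
  by_cases hpq : p = q
  · rw [hpq]
  · refine Relation.ReflTransGen.single ⟨hp, hq, hpq, h, ?_⟩
    rw [Nat.sub_zero]
    calc (Finset.univ.filter _).card ≤ Finset.univ.card := Finset.card_filter_le _ _
    _ = n := by simp

/-! ### Geometry: good points, the hole set, cubes -/

variable {r : ℝ}

/-- `good r x` iff some integer point is within `r` of `x`. -/
def good (r : ℝ) (x : E n) : Prop := dist (toE n (rnd x)) x ≤ r

lemma infDist_eq_rnd (x : E n) :
    Metric.infDist x (Set.range (toE n)) = dist (toE n (rnd x)) x := by
  apply le_antisymm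
  · rw [dist_comm]
    exact Metric.infDist_le_dist_of_mem (Set.mem_range_self (rnd x))
  · by_contra hlt
    push_neg at hlt
    obtain ⟨y, ⟨p, hpy⟩, hy⟩ := (Metric.infDist_lt_iff ⟨toE n (rnd x), Set.mem_range_self _⟩).mp hlt
    rw [← hpy, dist_comm] at hy
    exact absurd hy (not_lt.mpr (dist_rnd_le x p))

/-- The "hole" set: points with no integer point within `r`. It is open. -/
def Hs (n : ℕ) (r : ℝ) : Set (E n) := {z | r < Metric.infDist z (Set.range (toE n))}

lemma Hs_open : IsOpen (Hs n r) :=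
  isOpen_lt continuous_const (Metric.continuous_infDist_pt _)

lemma mem_Hs_iff {z : E n} : z ∈ Hs n r ↔ ¬ good r z := by
  rw [Hs, Set.mem_setOf_eq, infDist_eq_rnd, good, not_le]

lemma K_open (b : Fin n → ℤ) : IsOpen (K b) := by
  have : K b = ⋂ i, ((fun z : E n => z i) ⁻¹' (Set.Ioo (b i : ℝ) ((b i : ℝ) + 1))) := by
    ext z
    simp [K, Set.mem_iInter, Set.mem_Ioo]
  rw [this]
  exact isOpen_iInter_of_finite fun i => (isOpen_Ioo).preimage (contCoord i)

lemma closure_K_subset (b : Fin n → ℤ) :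
    closure (K b) ⊆ {z : E n | ∀ i, (b i : ℝ) ≤ z i ∧ z i ≤ (b i : ℝ) + 1} := by
  apply closure_minimal
  · intro z hz i
    exact ⟨(hz i).1.le, (hz i).2.le⟩
  · have : {z : E n | ∀ i, (b i : ℝ) ≤ z i ∧ z i ≤ (b i : ℝ) + 1} =
        ⋂ i, ((fun z : E n => z i) ⁻¹' (Set.Icc (b i : ℝ) ((b i : ℝ) + 1))) := by
      ext z
      simp [Set.mem_iInter, Set.mem_Icc]
    rw [this]
    exact isClosed_iInter fun i => (isClosed_Icc).preimage (contCoord i)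

/-- If a coordinate lies strictly within `(m - 1/2, m + 3/2)` then the rounding is `m` or `m+1`. -/
lemma rnd_two_values {a : ℝ} {m : ℤ} (h1 : (m : ℝ) - 1/2 < a) (h2 : a < (m : ℝ) + 3/2) :
    ⌊a + 1/2⌋ = m ∨ ⌊a + 1/2⌋ = m + 1 := by
  have hlo : m ≤ ⌊a + 1/2⌋ := Int.le_floor.mpr (by push_cast; linarith)
  have hhi : ⌊a + 1/2⌋ < m + 2 := Int.floor_lt.mpr (by push_cast; linarith)
  omega

/-- vertices of the cube `K b`: integer points with coordinates `b i` or `b i + 1`. -/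
def IsVert (b v : Fin n → ℤ) : Prop := ∀ i, v i = b i ∨ v i = b i + 1

lemma vert_linf {b v w : Fin n → ℤ} (hv : IsVert b v) (hw : IsVert b w) :
    ∀ i, |v i - w i| ≤ 1 := by
  intro i
  have h1 := hv i
  have h2 := hw i
  rw [abs_le]
  omega

/-- If `x` is within distance `1/4` of some point of the open cube `K b`,
then `rnd x` is a vertex of `K b`. -/
lemma rnd_vert_of_near {x y : E n} {b : Fin n → ℤ} (hy : y ∈ K b) (hxy : dist x y < 1/4) :
    IsVert b (rnd x) := by
  intro i
  have h1 := (hy i).1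
  have h2 := (hy i).2
  have h3 : |x i - y i| ≤ dist x y := coord_le_dist x y i
  have h4 := abs_le.mp (le_of_lt (lt_of_le_of_lt h3 hxy))
  exact rnd_two_values (by linarith) (by linarith)

/-- If `z` is in the closed cube, `rnd z` is a vertex. -/
lemma rnd_vert_of_closure {z : E n} {b : Fin n → ℤ}
    (hz : ∀ i, (b i : ℝ) ≤ z i ∧ z i ≤ (b i : ℝ) + 1) : IsVert b (rnd z) := by
  intro i
  exact rnd_two_values (by linarith [(hz i).1]) (by linarith [(hz i).2])

/-- Any two roundings of points at distance `< 1` have sup-distance at most 1. -/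
lemma rnd_linf_of_near {x y : E n} (h : dist x y < 1) :
    ∀ i, |rnd x i - rnd y i| ≤ 1 := by
  intro i
  have h1 := abs_le.mp (rnd_close x i)
  have h2 := abs_le.mp (rnd_close y i)
  have h3 := abs_lt.mp (lt_of_le_of_lt (coord_le_dist x y i) h)
  have hR : |((rnd x i - rnd y i : ℤ) : ℝ)| < 2 := by
    push_cast
    rw [abs_lt]
    constructor <;> linarith [h1.1, h1.2, h2.1, h2.2, h3.1, h3.2]
  have hR2 := abs_lt.mp hR
  have hh1 : (rnd x i - rnd y i : ℤ) < 2 := by exact_mod_cast hR2.2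
  have hh2 : (-2 : ℤ) < (rnd x i - rnd y i : ℤ) := by exact_mod_cast hR2.1
  rw [abs_le]
  omega

/-- Face lemma: a point with an integer coordinate is good (needs `r ≥ √(n-1)/2`). -/
lemma good_of_int_coord (hn : 1 ≤ n) (hr : Real.sqrt (n - 1) / 2 ≤ r) {z : E n}
    (i₀ : Fin n) (m : ℤ) (hz : z i₀ = (m : ℝ)) : good r z := by
  have hfloor : rnd z i₀ = m := by
    unfold rnd
    rw [hz]
    rw [show (m : ℝ) + 1/2 = (1:ℝ)/2 + m by ring, Int.floor_add_intCast]
    norm_num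
  unfold good
  rw [EuclideanSpace.dist_eq]
  have hsum : ∑ i, dist (toE n (rnd z) i) (z i) ^ 2 ≤ ((n : ℝ) - 1) / 4 := by
    rw [← Finset.sum_erase_add _ _ (Finset.mem_univ i₀)]
    have hterm : dist (toE n (rnd z) i₀) (z i₀) ^ 2 = 0 := by
      rw [toE_apply, hfloor, hz, Real.dist_eq, sub_self, abs_zero]
      norm_num
    rw [hterm, add_zero]
    calc ∑ i ∈ Finset.univ.erase i₀, dist (toE n (rnd z) i) (z i) ^ 2
        ≤ (Finset.univ.erase i₀).card • ((1:ℝ)/4) := by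
          apply Finset.sum_le_card_nsmul
          intro i _
          rw [toE_apply, Real.dist_eq]
          have := rnd_close z i
          nlinarith [abs_nonneg ((rnd z i : ℝ) - z i), sq_abs ((rnd z i : ℝ) - z i)]
      _ = ((n : ℝ) - 1) / 4 := by
          rw [Finset.card_erase_of_mem (Finset.mem_univ i₀)]
          simp only [Finset.card_univ, Fintype.card_fin, nsmul_eq_mul]
          have : ((n - 1 : ℕ) : ℝ) = (n : ℝ) - 1 := by
            push_cast [Nat.cast_sub hn]
            ring
          rw [this]
          ring
  calc Real.sqrt (∑ i, dist (toE n (rnd z) i) (z i) ^ 2)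
      ≤ Real.sqrt (((n : ℝ) - 1) / 4) := Real.sqrt_le_sqrt hsum
    _ = Real.sqrt ((n : ℝ) - 1) / 2 := by
        have hnn : (0:ℝ) ≤ (n:ℝ) - 1 := by
          have : (1:ℝ) ≤ (n:ℝ) := by exact_mod_cast hn
          linarith
        have h4 : Real.sqrt 4 = 2 := by
          rw [show (4:ℝ) = 2^2 by norm_num, Real.sqrt_sq (by norm_num : (0:ℝ) ≤ 2)]
        rw [Real.sqrt_div hnn 4, h4]
    _ ≤ r := hr

/-- a non-good point has no integer coordinates, hence lies in the open cube of its floor -/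
lemma mem_K_fl (hn : 1 ≤ n) (hr : Real.sqrt (n - 1) / 2 ≤ r) {z : E n} (hz : ¬ good r z) :
    z ∈ K (fl z) := by
  intro i
  have hne : z i ≠ ((⌊z i⌋ : ℤ) : ℝ) := by
    intro he
    exact hz (good_of_int_coord hn hr i ⌊z i⌋ he)
  constructor
  · exact lt_of_le_of_ne (Int.floor_le _) (Ne.symm hne)
  · exact Int.lt_floor_add_one _

lemma fl_eq_of_mem_K {y : E n} {b : Fin n → ℤ} (hy : y ∈ K b) : fl y = b := by
  funext i
  have h1 := (hy i).1
  have h2 := (hy i).2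
  apply Int.floor_eq_iff.mpr
  exact ⟨h1.le, by push_cast; exact h2⟩

/-- good is monotone under dist comparison: a witness gives goodness of rnd -/
lemma good_of_witness {x : E n} {p : Fin n → ℤ} (hp : dist (toE n p) x ≤ r) : good r x :=
  le_trans (dist_rnd_le x p) hp

/-- In a preconnected set, a nonempty proper relatively-open subset has a boundary point. -/
lemma exists_boundary {α : Type*} [TopologicalSpace α] {X U : Set α}
    (hX : IsPreconnected X) (hU : IsOpen U)
    (hne : (X ∩ U).Nonempty) (hmiss : ∃ x ∈ X, x ∉ U) :
    ∃ w ∈ X, w ∈ closure (X ∩ U) ∧ w ∉ X ∩ U := by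
  by_contra hcon
  push_neg at hcon
  obtain ⟨x, hxX, hxU⟩ := hmiss
  have hxnc : x ∉ closure (X ∩ U) := fun hc => hxU (hcon x hxX hc).2
  have key := hX U (closure (X ∩ U))ᶜ hU (isOpen_compl_iff.mpr isClosed_closure)
    (fun z hz => by
      by_cases hzc : z ∈ closure (X ∩ U)
      · exact Or.inl (hcon z hz hzc).2
      · exact Or.inr hzc)
    hne ⟨x, hxX, hxnc⟩
  obtain ⟨z, hzX, hzU, hznc⟩ := key
  exact hznc (subset_closure ⟨hzX, hzU⟩)

end DiscProof

open DiscProof in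
/-- If `X ⊆ ℝ^n` (`n ≥ 2`) is connected, then for every `r ≥ √(n-1) / 2` the `r`-offset
discretization of `X` is `0`-connected. -/
theorem disc_zero_conn_of_connected (n : ℕ) (hn : 2 ≤ n)
    (X : Set (EuclideanSpace ℝ (Fin n))) (hX : IsConnected X)
    (r : ℝ) (hr : Real.sqrt (n - 1) / 2 ≤ r) :
    kConn n 0 (disc n X r) := by
  classical
  intro p hp q hq
  have hn1 : 1 ≤ n := le_trans (by norm_num) hn
  set S := disc n X r with hS
  set Rel := fun a b => a ∈ S ∧ b ∈ S ∧ kAdj n 0 a b with hRel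
  obtain ⟨xp, hxpX, hxp⟩ := mem_disc_iff.mp hp
  obtain ⟨xq, hxqX, hxq⟩ := mem_disc_iff.mp hq
  -- the reachability class of p
  set InC := fun v : Fin n → ℤ => v ∈ S ∧ Relation.ReflTransGen Rel p v with hInC
  have hsymm : ∀ {a b}, Relation.ReflTransGen Rel a b → Relation.ReflTransGen Rel b a :=
    fun h => by
      haveI : Std.Symm Rel := ⟨fun a b hab => relSymm (n := n) (S := S) hab⟩
      exact (Relation.ReflTransGen.symmetric (r := Rel)).symm _ _ h
  have hInC_adj : ∀ v w, InC v → w ∈ S → (∀ i, |v i - w i| ≤ 1) → InC w := by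
    rintro v w ⟨hvS, hv⟩ hwS hlinf
    exact ⟨hwS, hv.trans (rel_of_linf hvS hwS hlinf)⟩
  have hInC_adj' : ∀ v w, InC v → w ∈ S → (∀ i, |w i - v i| ≤ 1) → InC w := by
    intro v w hv hwS hlinf
    exact hInC_adj v w hv hwS (fun i => by rw [abs_sub_comm]; exact hlinf i)
  have hrndS : ∀ z ∈ X, good r z → rnd z ∈ S := fun z hz hg => mem_disc_of hz hg
  have hconn : ∀ z ∈ X, ∀ a : Fin n → ℤ, dist (toE n a) z ≤ r →
      Relation.ReflTransGen Rel a (rnd z) :=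
    fun z hz a ha => conn_to_rnd hz (msr a (rnd z)) a ha le_rfl
  have hInCp : InC (rnd xp) := ⟨hrndS xp hxpX (good_of_witness hxp), hconn xp hxpX p hxp⟩
  -- near-transfer between good points
  have hnear : ∀ x ∈ X, ∀ y ∈ X, good r x → good r y → dist x y < 1 →
      (InC (rnd x) ↔ InC (rnd y)) := by
    intro x hxX y hyX hgx hgy hd
    have hlinf := rnd_linf_of_near hd
    constructor
    · intro h; exact hInC_adj _ _ h (hrndS y hyX hgy) hlinf
    · intro h; exact hInC_adj' _ _ h (hrndS x hxX hgx) hlinf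
  -- transfer across a hole: any good point in the closure of the hole-piece has
  -- its rounding equivalent to rnd x, for x good near the hole-piece
  have hvert_iff : ∀ y ∈ X, ¬ good r y → ∀ x ∈ X, good r x → dist x y < 1/4 →
      ∀ z ∈ X, z ∈ closure (X ∩ (Hs n r ∩ K (fl y))) → good r z →
      (InC (rnd z) ↔ InC (rnd x)) := by
    intro y hyX hgy x hxX hgx hd z hzX hzcl hgz
    have hyK : y ∈ K (fl y) := mem_K_fl hn1 hr hgy
    have hzbox : ∀ i, ((fl y) i : ℝ) ≤ z i ∧ z i ≤ ((fl y) i : ℝ) + 1 :=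
      closure_K_subset (fl y)
        (closure_mono (fun w hw => hw.2.2) hzcl)
    have hvz : IsVert (fl y) (rnd z) := rnd_vert_of_closure hzbox
    have hvx : IsVert (fl y) (rnd x) := rnd_vert_of_near hyK hd
    have hlinf := vert_linf hvz hvx
    constructor
    · intro h; exact hInC_adj _ _ h (hrndS x hxX hgx) hlinf
    · intro h; exact hInC_adj' _ _ h (hrndS z hzX hgz) hlinf
  -- existence of a good boundary point of a hole-piece
  have hexists : ∀ y ∈ X, ¬ good r y →
      ∃ z ∈ X, z ∈ closure (X ∩ (Hs n r ∩ K (fl y))) ∧ good r z := by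
    intro y hyX hgy
    have hyK : y ∈ K (fl y) := mem_K_fl hn1 hr hgy
    have hyH : y ∈ Hs n r := mem_Hs_iff.mpr hgy
    have hxpU : xp ∉ Hs n r ∩ K (fl y) := by
      intro hc
      exact (mem_Hs_iff.mp hc.1) (good_of_witness hxp)
    obtain ⟨w, hwX, hwcl, hwnP⟩ := exists_boundary hX.isPreconnected
      (IsOpen.inter Hs_open (K_open (fl y))) ⟨y, hyX, hyH, hyK⟩ ⟨xp, hxpX, hxpU⟩
    refine ⟨w, hwX, hwcl, ?_⟩
    by_contra hgw
    have hwH : w ∈ Hs n r := mem_Hs_iff.mpr hgw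
    have hwbox : ∀ i, ((fl y) i : ℝ) ≤ w i ∧ w i ≤ ((fl y) i : ℝ) + 1 :=
      closure_K_subset (fl y) (closure_mono (fun a ha => ha.2.2) hwcl)
    have hwK : w ∈ K (fl y) := by
      intro i
      have hne1 : w i ≠ (((fl y) i : ℤ) : ℝ) := fun he => hgw (good_of_int_coord hn1 hr i _ he)
      have hne2 : w i ≠ ((((fl y) i + 1 : ℤ)) : ℝ) := fun he =>
        hgw (good_of_int_coord hn1 hr i _ he)
      constructor
      · exact lt_of_le_of_ne (hwbox i).1 (fun he => hne1 he.symm)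
      · refine lt_of_le_of_ne (hwbox i).2 (fun he => hne2 ?_)
        rw [he]; push_cast; ring
    exact hwnP ⟨hwX, hwH, hwK⟩
  -- the two relatively-open pieces
  set PA := fun x : EuclideanSpace ℝ (Fin n) => (good r x ∧ InC (rnd x)) ∨
    (¬ good r x ∧ ∃ z ∈ X, z ∈ closure (X ∩ (Hs n r ∩ K (fl x))) ∧ good r z ∧ InC (rnd z))
    with hPA
  set PB := fun x : EuclideanSpace ℝ (Fin n) => (good r x ∧ ¬ InC (rnd x)) ∨
    (¬ good r x ∧ ¬ ∃ z ∈ X, z ∈ closure (X ∩ (Hs n r ∩ K (fl x))) ∧ good r z ∧ InC (rnd z))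
    with hPB
  set nb := fun x : EuclideanSpace ℝ (Fin n) =>
    if good r x then Metric.ball x (1/4) else Hs n r ∩ K (fl x) with hnb
  have hnb_open : ∀ x, IsOpen (nb x) := by
    intro x
    by_cases h : good r x
    · simp only [hnb, if_pos h]
      exact Metric.isOpen_ball
    · simp only [hnb, if_neg h]
      exact IsOpen.inter Hs_open (K_open (fl x))
  have hnb_mem : ∀ x ∈ X, x ∈ nb x := by
    intro x hxX
    by_cases h : good r x
    · simp only [hnb, if_pos h]
      exact Metric.mem_ball_self (by norm_num)
    · simp only [hnb, if_neg h]
      exact ⟨mem_Hs_iff.mpr h, mem_K_fl hn1 hr h⟩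
  set u := ⋃ x ∈ {x ∈ X | PA x}, nb x with hu
  set v := ⋃ x ∈ {x ∈ X | PB x}, nb x with hv
  have hu_open : IsOpen u := isOpen_biUnion (fun x _ => hnb_open x)
  have hv_open : IsOpen v := isOpen_biUnion (fun x _ => hnb_open x)
  have hcover : X ⊆ u ∪ v := by
    intro x hxX
    have : PA x ∨ PB x := by
      by_cases hg : good r x
      · by_cases hc : InC (rnd x)
        · exact Or.inl (Or.inl ⟨hg, hc⟩)
        · exact Or.inr (Or.inl ⟨hg, hc⟩)
      · by_cases he : ∃ z ∈ X, z ∈ closure (X ∩ (Hs n r ∩ K (fl x))) ∧ good r z ∧ InC (rnd z)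
        · exact Or.inl (Or.inr ⟨hg, he⟩)
        · exact Or.inr (Or.inr ⟨hg, he⟩)
    rcases this with h | h
    · exact Or.inl (Set.mem_biUnion ⟨hxX, h⟩ (hnb_mem x hxX))
    · exact Or.inr (Set.mem_biUnion ⟨hxX, h⟩ (hnb_mem x hxX))
  have hu_sub : ∀ y ∈ X, y ∈ u → PA y := by
    intro y hyX hyu
    obtain ⟨x, ⟨hxX, hxPA⟩, hynb⟩ := Set.mem_iUnion₂.mp hyu
    rcases hxPA with ⟨hgx, hInCx⟩ | ⟨hgx, z, hzX, hzcl, hzg, hzInC⟩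
    · have hynb2 : y ∈ (if good r x then Metric.ball x (1/4) else Hs n r ∩ K (fl x)) := hynb
      rw [if_pos hgx] at hynb2
      have hd : dist x y < 1/4 := by rw [dist_comm]; exact Metric.mem_ball.mp hynb2
      by_cases hgy : good r y
      · exact Or.inl ⟨hgy, (hnear x hxX y hyX hgx hgy (lt_trans hd (by norm_num))).mp hInCx⟩
      · refine Or.inr ⟨hgy, ?_⟩
        obtain ⟨w, hwX, hwcl, hwg⟩ := hexists y hyX hgy
        exact ⟨w, hwX, hwcl, hwg,
          (hvert_iff y hyX hgy x hxX hgx hd w hwX hwcl hwg).mpr hInCx⟩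
    · have hynb2 : y ∈ (if good r x then Metric.ball x (1/4) else Hs n r ∩ K (fl x)) := hynb
      rw [if_neg hgx] at hynb2
      have hgy : ¬ good r y := mem_Hs_iff.mp hynb2.1
      have hfl : fl y = fl x := by rw [fl_eq_of_mem_K hynb2.2]
      refine Or.inr ⟨hgy, ?_⟩
      rw [hfl]
      exact ⟨z, hzX, hzcl, hzg, hzInC⟩
  have hv_sub : ∀ y ∈ X, y ∈ v → PB y := by
    intro y hyX hyv
    obtain ⟨x, ⟨hxX, hxPB⟩, hynb⟩ := Set.mem_iUnion₂.mp hyv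
    rcases hxPB with ⟨hgx, hInCx⟩ | ⟨hgx, hne⟩
    · have hynb2 : y ∈ (if good r x then Metric.ball x (1/4) else Hs n r ∩ K (fl x)) := hynb
      rw [if_pos hgx] at hynb2
      have hd : dist x y < 1/4 := by rw [dist_comm]; exact Metric.mem_ball.mp hynb2
      by_cases hgy : good r y
      · exact Or.inl ⟨hgy, fun hc =>
          hInCx ((hnear x hxX y hyX hgx hgy (lt_trans hd (by norm_num))).mpr hc)⟩
      · refine Or.inr ⟨hgy, ?_⟩
        rintro ⟨z, hzX, hzcl, hzg, hzInC⟩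
        exact hInCx ((hvert_iff y hyX hgy x hxX hgx hd z hzX hzcl hzg).mp hzInC)
    · have hynb2 : y ∈ (if good r x then Metric.ball x (1/4) else Hs n r ∩ K (fl x)) := hynb
      rw [if_neg hgx] at hynb2
      have hgy : ¬ good r y := mem_Hs_iff.mp hynb2.1
      have hfl : fl y = fl x := by rw [fl_eq_of_mem_K hynb2.2]
      refine Or.inr ⟨hgy, ?_⟩
      rw [hfl]
      exact hne
  have hdisj : ∀ y, PA y → PB y → False := by
    intro y hA hB
    rcases hA with ⟨hg, hc⟩ | ⟨hg, he⟩ <;> rcases hB with ⟨hg', hc'⟩ | ⟨hg', he'⟩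
    · exact hc' hc
    · exact hg' hg
    · exact hg hg'
    · exact he' he
  have hXu : (X ∩ u).Nonempty := by
    refine ⟨xp, hxpX, Set.mem_biUnion ⟨hxpX, ?_⟩ (hnb_mem xp hxpX)⟩
    exact Or.inl ⟨good_of_witness hxp, hInCp⟩
  have hv_empty : ¬ (X ∩ v).Nonempty := by
    intro hne
    obtain ⟨z, hzX, hzu, hzv⟩ := hX.isPreconnected u v hu_open hv_open hcover hXu hne
    exact hdisj z (hu_sub z hzX hzu) (hv_sub z hzX hzv)
  have hxq_u : xq ∈ u := by
    rcases hcover hxqX with h | h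
    · exact h
    · exact absurd ⟨xq, hxqX, h⟩ hv_empty
  have hPAq := hu_sub xq hxqX hxq_u
  have hgq : good r xq := good_of_witness hxq
  have hInCq : InC (rnd xq) := by
    rcases hPAq with ⟨_, h⟩ | ⟨h, _⟩
    · exact h
    · exact absurd hgq h
  exact hInCq.2.trans (hsymm (hconn xq hxqX q hxq))
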